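/- Let p be a prime and m, l, r, s natural numbers with l ≥ 1, 1 ≤ r ≤ l and s ≤ r−1. Then, as real numbers, ⌈l/p^{m+1}⌉ − (l−s)/(p−1) + v_p(C(l,r)) + v_p(C(r−1,s)) + v_p((l−1−s)!) − v_p(⌊(l−1−s)/p^{m+2}⌋!) ≥ ((p²−p−1)·l)/(p^{m+2}(p−1)) − log_p(l+1) − 2. -/

import Mathlib

set_option maxHeartbeats 1000000


/-- `ν_m(k) = ⌈k / p^(m+1)⌉`, as in the appendix of the paper. -/
def nuCeil (p m k : ℕ) : ℕ := ⌈(k : ℚ) / (p : ℚ) ^ (m + 1)⌉₊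

/-- Estimate for the valuation of the coefficients
`c_l(r,s) = (−1)^{r−1+s}·(p^{ν_m(l)}/π^{l−s})·C(l,r)·C(r−1,s)·(l−1−s)!/(q_{l−1−s}^{(m+2)})!`
in the division lemma:
`⌈l/p^{m+1}⌉ − (l−s)/(p−1) + v_p(C(l,r)) + v_p(C(r−1,s)) + v_p((l−1−s)!)
  − v_p(⌊(l−1−s)/p^{m+2}⌋!) ≥ ((p²−p−1)·l)/(p^{m+2}(p−1)) − log_p(l+1) − 2`. -/
theorem quotient_coefficient_valuation_estimate
    (p : ℕ) (hp : p.Prime) (m l r s : ℕ)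
    (hl : 1 ≤ l) (hr1 : 1 ≤ r) (hrl : r ≤ l) (hs : s ≤ r - 1) :
    ((p : ℝ) ^ 2 - p - 1) * l / ((p : ℝ) ^ (m + 2) * (p - 1)) - Real.logb p (l + 1) - 2 ≤
      (nuCeil p m l : ℝ) - ((l : ℝ) - s) / (p - 1) +
        (padicValNat p (l.choose r) : ℝ) + (padicValNat p ((r - 1).choose s) : ℝ) +
        (padicValNat p (l - 1 - s).factorial : ℝ) -
        (padicValNat p ((l - 1 - s) / p ^ (m + 2)).factorial : ℝ) := by
  haveI : Fact p.Prime := ⟨hp⟩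
  have hp2 : 2 ≤ p := hp.two_le
  set n := l - 1 - s with hn
  have hsl : s + 1 ≤ l := by omega
  set q := n / p ^ (m + 2) with hq
  set P : ℝ := (p : ℝ) with hPdef
  have hP2 : (2:ℝ) ≤ P := by rw [hPdef]; exact_mod_cast hp2
  have hP1 : (0:ℝ) < P - 1 := by linarith
  set A : ℝ := P ^ (m + 2) with hAdef
  have hA0 : (0:ℝ) < A := by positivity
  set S := (p.digits n).sum with hSdef
  have hSn : S ≤ n := Nat.digit_sum_le p n
  set V1 := padicValNat p n.factorial with hV1def
  set V2 := padicValNat p q.factorial with hV2def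
  set G := Real.logb p (l + 1) with hGdef
  -- Legendre for n
  have hV1 : (P - 1) * (V1 : ℝ) = (n : ℝ) - S := by
    have h := sub_one_mul_padicValNat_factorial (p := p) n
    have h2 := congrArg (fun k : ℕ => (k : ℝ)) h
    simp only [Nat.cast_mul, Nat.cast_sub hp.one_le, Nat.cast_sub hSn, Nat.cast_one] at h2
    rw [Nat.cast_sub hSn] at h2
    exact h2
  -- Legendre bound for q
  have hV2 : (P - 1) * (V2 : ℝ) ≤ (q : ℝ) := by
    have h : (p - 1) * V2 ≤ q := by
      rw [hV2def, sub_one_mul_padicValNat_factorial (p := p) q]; exact Nat.sub_le _ _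
    have h2 : ((p - 1 : ℕ) : ℝ) * (V2 : ℝ) ≤ (q : ℝ) := by exact_mod_cast h
    rwa [Nat.cast_sub hp.one_le, Nat.cast_one] at h2
  have hqA : (q : ℝ) * A ≤ (n : ℝ) := by
    have h : q * p ^ (m + 2) ≤ n := Nat.div_mul_le_self n _
    have h2 : ((q * p ^ (m + 2) : ℕ) : ℝ) ≤ (n : ℝ) := by exact_mod_cast h
    push_cast at h2
    exact h2
  have hnR : (n : ℝ) + s + 1 = l := by exact_mod_cast (by omega : n + s + 1 = l)
  -- digit sum bound
  have hG0 : (0:ℝ) ≤ G := by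
    have h0 : (0:ℝ) ≤ (l:ℝ) := Nat.cast_nonneg l
    exact Real.logb_nonneg (by exact_mod_cast hp.one_lt) (by linarith)
  have hS' : (S : ℝ) ≤ (P - 1) * (G + 1) := by
    have hlog : (Nat.log p n : ℝ) ≤ G := by
      have h1 : Nat.log p n ≤ Nat.log p l := Nat.log_mono_right (by omega)
      have h2 : (Nat.log p l : ℝ) ≤ Real.logb p l := Real.natLog_le_logb l p
      have h3 : Real.logb p l ≤ G := by
        rw [hGdef]
        apply Real.logb_le_logb_of_le (by exact_mod_cast hp.one_lt)
          (by exact_mod_cast hl) (by push_cast; linarith)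
      have h4 : (Nat.log p n : ℝ) ≤ (Nat.log p l : ℝ) := by exact_mod_cast h1
      linarith
    have hSnat : S ≤ (p - 1) * (Nat.log p n + 1) := by
      rcases Nat.eq_zero_or_pos n with h0 | h0
      · simp [hSdef, h0]
      · have hlen := Nat.digits_len p n hp.one_lt (by omega)
        have hsum := List.sum_le_card_nsmul (p.digits n) (p - 1)
          (fun x hx => by have := Nat.digits_lt_base hp.one_lt hx; omega)
        rw [hlen, smul_eq_mul] at hsum
        calc S ≤ (Nat.log p n + 1) * (p - 1) := hsum
          _ = (p - 1) * (Nat.log p n + 1) := by ring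
    have hScast : (S : ℝ) ≤ ((p - 1 : ℕ) : ℝ) * ((Nat.log p n : ℝ) + 1) := by
      exact_mod_cast hSnat
    rw [Nat.cast_sub hp.one_le, Nat.cast_one] at hScast
    nlinarith [mul_le_mul_of_nonneg_left hlog (le_of_lt hP1)]
  -- ceiling bound
  have hν : (l : ℝ) * P ≤ (nuCeil p m l : ℝ) * A := by
    have h := Nat.le_ceil ((l : ℚ) / (p : ℚ) ^ (m + 1))
    have hR : (l : ℝ) / P ^ (m + 1) ≤ (nuCeil p m l : ℝ) := by
      have h2 := (Rat.cast_le (K := ℝ)).mpr h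
      push_cast at h2
      rw [hPdef]
      simp only [nuCeil]
      exact_mod_cast h2
    have hB : (0:ℝ) < P ^ (m + 1) := by positivity
    rw [div_le_iff₀ hB] at hR
    have : A = P ^ (m + 1) * P := by rw [hAdef]; ring
    nlinarith
  -- nonnegativity of the choose valuations
  have hc1 : (0:ℝ) ≤ (padicValNat p (l.choose r) : ℝ) := Nat.cast_nonneg _
  have hc2 : (0:ℝ) ≤ (padicValNat p ((r - 1).choose s) : ℝ) := Nat.cast_nonneg _
  -- clear denominators
  rw [sub_sub, sub_le_iff_le_add, div_le_iff₀ (by positivity : (0:ℝ) < A * (P - 1))]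
  set T := ((l : ℝ) - s) / (P - 1) with hTdef
  have hT : T * (P - 1) = (l : ℝ) - s := div_mul_cancel₀ _ (ne_of_gt hP1)
  have hV1A : ((P - 1) * (V1 : ℝ)) * A = ((n : ℝ) - S) * A := by rw [hV1]
  have hTA : (T * (P - 1)) * A = ((l : ℝ) - (s : ℝ)) * A := by rw [hT]
  nlinarith [mul_le_mul_of_nonneg_right hν (le_of_lt hP1),
    mul_le_mul_of_nonneg_right hV2 hA0.le,
    mul_le_mul_of_nonneg_right hS' hA0.le,
    mul_nonneg hc1 (mul_nonneg hA0.le hP1.le),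
    mul_nonneg hc2 (mul_nonneg hA0.le hP1.le),
    mul_nonneg hA0.le (by linarith : (0:ℝ) ≤ P - 2),
    hqA, hnR, hV1A, hTA]
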